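/- Let T be a finite tree with at least three vertices such that T^2 is Hamiltonian. Then T does not contain S(K_{1,3}) as a subgraph, where S(K_{1,3}) is the star K_{1,3} with every edge subdivided once. -/

import Mathlib

open SimpleGraph

universe u w

/-- `G` contains `H` as a subgraph. -/
def ContainsSubgraph {V : Type u} {W : Type w} (G : SimpleGraph V) (H : SimpleGraph W) : Prop :=
  ∃ f : H →g G, Function.Injective f

/-- The square of a graph: join distinct vertices at distance at most 2. -/
def square {V : Type u} (G : SimpleGraph V) : SimpleGraph V where
  Adj u v := u ≠ v ∧ (G.Adj u v ∨ ∃ x, G.Adj u x ∧ G.Adj x v)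
  symm := by
    refine ⟨?_⟩
    rintro u v ⟨h, h' | ⟨x, h1, h2⟩⟩
    · exact ⟨h.symm, Or.inl h'.symm⟩
    · exact ⟨h.symm, Or.inr ⟨x, h2.symm, h1.symm⟩⟩
  loopless := ⟨fun u h => h.1 rfl⟩

/-- The star `K_{1,3}` with each edge subdivided once: centre `0`, middle
vertices `1, 2, 3`, leaves `4, 5, 6`. -/
def SK13 : SimpleGraph (Fin 7) :=
  SimpleGraph.fromEdgeSet {s(0,1), s(0,2), s(0,3), s(1,4), s(2,5), s(3,6)}

section Aux

variable {V : Type u}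

open SimpleGraph.Walk

/-- A walk starting in `S` and ending outside has a dart exiting `S`. -/
lemma exists_exit_dart {G : SimpleGraph V} {S : Set V} :
    ∀ {u v : V} (w : G.Walk u v), u ∈ S → v ∉ S →
      ∃ d ∈ w.darts, d.fst ∈ S ∧ d.snd ∉ S := by
  intro u v w
  induction w with
  | nil => intro hu hv; exact absurd hu hv
  | @cons a b c h p ih =>
    intro hu hv
    by_cases hb : b ∈ S
    · obtain ⟨d, hd, h1, h2⟩ := ih hb hv
      exact ⟨d, List.mem_cons_of_mem _ hd, h1, h2⟩
    · exact ⟨⟨(a, b), h⟩, List.mem_cons_self, hu, hb⟩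

/-- A Hamiltonian cycle has a dart exiting any set that misses some vertex. -/
lemma cycle_exit [DecidableEq V] {G : SimpleGraph V} {a : V} {p : G.Walk a a}
    (hp : p.IsHamiltonianCycle) {S : Set V} {x y : V} (hx : x ∈ S) (hy : y ∉ S) :
    ∃ d ∈ p.darts, d.fst ∈ S ∧ d.snd ∉ S := by
  have hxs : x ∈ p.support := hp.mem_support x
  have hyt : y ∈ p.support.tail := by
    rw [← Walk.support_tail_of_not_nil p hp.1.not_nil]
    exact hp.isHamiltonian_tail.mem_support y
  have hys : y ∈ (p.rotate x hxs).support :=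
    List.mem_of_mem_tail ((Walk.support_rotate p x hxs).mem_iff.2 hyt)
  obtain ⟨d, hd, h1, h2⟩ := exists_exit_dart ((p.rotate x hxs).takeUntil y hys) hx hy
  exact ⟨d, (Walk.rotate_darts p x hxs).mem_iff.1
      (Walk.darts_takeUntil_subset _ hys hd), h1, h2⟩

lemma dart_snd_unique [DecidableEq V] {G : SimpleGraph V} {a : V} {p : G.Walk a a}
    (hp : p.IsHamiltonianCycle) {d1 d2 : G.Dart}
    (h1 : d1 ∈ p.darts) (h2 : d2 ∈ p.darts) (h : d1.snd = d2.snd) : d1 = d2 := by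
  have hn : (p.darts.map (fun d => d.snd)).Nodup := by
    rw [Walk.map_snd_darts]
    exact hp.1.support_nodup
  exact List.inj_on_of_nodup_map hn h1 h2 h

lemma support_tail_ne_nil {G : SimpleGraph V} {a : V} {p : G.Walk a a} (hnil : ¬ p.Nil) :
    p.support.tail ≠ [] := by
  have : p.support.tail.length = p.length := by
    have := Walk.length_support p
    have h2 : p.support.tail.length + 1 = p.support.length := by
      rw [Walk.support_eq_cons p]; simp
    omega
  intro h
  rw [h] at this
  simp at this
  exact hnil (Walk.nil_iff_length_eq.2 this.symm)

lemma dart_fst_unique [DecidableEq V] {G : SimpleGraph V} {a : V} {p : G.Walk a a}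
    (hp : p.IsHamiltonianCycle) {d1 d2 : G.Dart}
    (h1 : d1 ∈ p.darts) (h2 : d2 ∈ p.darts) (h : d1.fst = d2.fst) : d1 = d2 := by
  have hne : p.support.tail ≠ [] := support_tail_ne_nil hp.1.not_nil
  have hlast : p.support.tail.getLast hne = a := by
    rw [List.getLast_tail]
    exact Walk.getLast_support p
  have htt : p.support.tail.dropLast ++ [a] = p.support.tail := by
    conv_rhs => rw [← List.dropLast_append_getLast hne]
    rw [hlast]
  have hndt : (p.support.tail.dropLast ++ [a]).Nodup := by
    rw [htt]; exact hp.1.support_nodup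
  have hnd : p.support.dropLast.Nodup := by
    have hc : p.support = (a :: p.support.tail.dropLast) ++ [a] := by
      rw [Walk.support_eq_cons p]
      conv_lhs => rw [← htt]
      simp
    rw [hc, List.dropLast_concat]
    rw [List.nodup_append] at hndt
    refine List.nodup_cons.2 ⟨?_, hndt.1⟩
    intro hmem
    exact hndt.2.2 a hmem a (by simp) rfl
  have hn : (p.darts.map (fun d => d.fst)).Nodup := by
    rw [Walk.map_fst_darts]; exact hnd
  exact List.inj_on_of_nodup_map hn h1 h2 h

/-- The component of `m` after deleting the edge `(c, m)`. -/
def Aset (T : SimpleGraph V) (c m : V) : Set V :=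
  {v | (T.deleteEdges {s(c, m)}).Reachable m v}

lemma mid_mem_Aset (T : SimpleGraph V) (c m : V) : m ∈ Aset T c m := Reachable.refl m

lemma center_not_mem_Aset [DecidableEq V] {T : SimpleGraph V} (hT : T.IsAcyclic) {c m : V}
    (hcm : T.Adj c m) : c ∉ Aset T c m := by
  rintro ⟨w⟩
  have hpw : w.bypass.IsPath := Walk.bypass_isPath w
  have hq : (w.bypass.mapLe (T.deleteEdges_le _)).IsPath := hpw.mapLe _
  have hr : (Walk.cons hcm.symm Walk.nil : T.Walk m c).IsPath := by
    simp [hcm.ne']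
  have := hT.path_unique ⟨_, hq⟩ ⟨_, hr⟩
  have hedge : s(m, c) ∈ (w.bypass.mapLe (T.deleteEdges_le _)).edges := by
    rw [Subtype.ext_iff] at this
    simp only at this
    rw [this]
    simp
  rw [Walk.mapLe, Walk.edges_map] at hedge
  simp only [List.mem_map] at hedge
  obtain ⟨e, he, hee⟩ := hedge
  have : e = s(m, c) := by
    rw [← hee]
    rcases e with ⟨x, y⟩
    rfl
  subst this
  have := Walk.edges_subset_edgeSet w.bypass he
  rw [edgeSet_deleteEdges] at this
  simp [Sym2.eq_swap] at this

lemma leaf_mem_Aset {T : SimpleGraph V} {c m ℓ : V} (hcm : T.Adj c m)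
    (hml : T.Adj m ℓ) (hlc : ℓ ≠ c) : ℓ ∈ Aset T c m := by
  refine Adj.reachable ?_
  rw [deleteEdges_adj]
  refine ⟨hml, ?_⟩
  simp only [Set.mem_singleton_iff, Sym2.eq_iff]
  rintro (⟨h1, h2⟩ | ⟨h1, h2⟩)
  · exact hcm.ne h1.symm
  · exact hlc h2

lemma cross_Aset [DecidableEq V] {T : SimpleGraph V} (hT : T.IsAcyclic) {c m : V} (hcm : T.Adj c m)
    {u v : V} (hu : u ∈ Aset T c m) (hv : v ∉ Aset T c m) (ha : T.Adj u v) :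
    u = m ∧ v = c := by
  by_cases he : s(u, v) = s(c, m)
  · rw [Sym2.eq_iff] at he
    rcases he with ⟨h1, h2⟩ | ⟨h1, h2⟩
    · exact absurd (h1 ▸ hu) (center_not_mem_Aset hT hcm)
    · exact ⟨h1, h2⟩
  · exfalso
    refine hv (hu.trans (Adj.reachable ?_))
    rw [deleteEdges_adj]
    exact ⟨ha, by simpa using he⟩

lemma square_cross_Aset [DecidableEq V] {T : SimpleGraph V} (hT : T.IsAcyclic) {c m : V} (hcm : T.Adj c m)
    {u v : V} (hu : u ∈ Aset T c m) (hv : v ∉ Aset T c m) (ha : (square T).Adj u v) :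
    u = m ∨ v = c := by
  rcases ha.2 with h | ⟨x, h1, h2⟩
  · exact Or.inl (cross_Aset hT hcm hu hv h).1
  · by_cases hx : x ∈ Aset T c m
    · exact Or.inr (cross_Aset hT hcm hx hv h2).2
    · exact Or.inl (cross_Aset hT hcm hu hx h1).1

lemma Aset_disjoint [DecidableEq V] {T : SimpleGraph V} (hT : T.IsAcyclic) {c m m' : V}
    (hcm : T.Adj c m) (hcm' : T.Adj c m') (hne : m ≠ m') {v : V}
    (h1 : v ∈ Aset T c m) (h2 : v ∈ Aset T c m') : False := by
  have hm' : m' ∉ Aset T c m := by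
    intro h
    exact hne ((cross_Aset hT hcm h (center_not_mem_Aset hT hcm) hcm'.symm).1).symm
  obtain ⟨w0⟩ := h2
  obtain ⟨d, hd, hdf, hds⟩ := exists_exit_dart w0.reverse h1 hm'
  have hadj : T.Adj d.fst d.snd := by
    have := d.adj
    rw [deleteEdges_adj] at this
    exact this.1
  have hfm : d.fst = m := (cross_Aset hT hcm hdf hds hadj).1
  have hms : m ∈ w0.support := by
    have := Walk.dart_fst_mem_support_of_mem_darts _ hd
    rw [hfm] at this
    rw [Walk.support_reverse] at this
    exact List.mem_reverse.1 this
  have hreach : m ∈ Aset T c m' := ⟨w0.takeUntil m hms⟩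
  exact hne (cross_Aset hT hcm' hreach (center_not_mem_Aset hT hcm') hcm.symm).1

/-- Key lemma: the Hamiltonian cycle of `T²` has a dart joining `c` to the
component of `m`. -/
lemma key_dart [DecidableEq V] {T : SimpleGraph V} (hT : T.IsAcyclic)
    {c m ℓ a : V} (hcm : T.Adj c m) (hml : T.Adj m ℓ) (hlc : ℓ ≠ c)
    {p : (square T).Walk a a} (hp : p.IsHamiltonianCycle) :
    ∃ d ∈ p.darts, (d.fst = c ∧ d.snd ∈ Aset T c m) ∨
      (d.snd = c ∧ d.fst ∈ Aset T c m) := by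
  by_contra hcon
  have hcA : c ∉ Aset T c m := center_not_mem_Aset hT hcm
  have hmA : m ∈ Aset T c m := mid_mem_Aset T c m
  have hlA : ℓ ∈ Aset T c m := leaf_mem_Aset hcm hml hlc
  -- a dart entering `Aset T c m`
  obtain ⟨d1, hd1, h1f, h1s⟩ :=
    cycle_exit hp (S := (Aset T c m)ᶜ) (Set.mem_compl hcA) (fun h => h hmA)
  rw [Set.mem_compl_iff] at h1f
  have h1s' : d1.snd ∈ Aset T c m := not_not.1 h1s
  have h1 : d1.snd = m := by
    rcases square_cross_Aset hT hcm h1s' h1f d1.adj.symm with h | h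
    · exact h
    · exact absurd ⟨d1, hd1, Or.inl ⟨h, h1s'⟩⟩ hcon
  -- a dart exiting `Aset T c m \ {m}`
  obtain ⟨d2, hd2, h2f, h2s⟩ :=
    cycle_exit hp (S := Aset T c m \ {m}) (⟨hlA, by simp [hml.ne.symm]⟩ :
      ℓ ∈ Aset T c m \ {m}) (fun h => hcA h.1)
  have h2 : d2.snd = m := by
    by_cases hin : d2.snd ∈ Aset T c m
    · by_contra hne2
      exact h2s ⟨hin, hne2⟩
    · rcases square_cross_Aset hT hcm h2f.1 hin d2.adj with h | h
      · exact absurd h (by simpa using h2f.2)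
      · exact absurd ⟨d2, hd2, Or.inr ⟨h, h2f.1⟩⟩ hcon
  have : d1 = d2 := dart_snd_unique hp hd1 hd2 (h1.trans h2.symm)
  rw [this] at h1f
  exact h1f h2f.1

end Aux

/-- If the square of a finite tree on at least three vertices is
Hamiltonian, then the tree does not contain `S(K_{1,3})` as a subgraph. -/
theorem stmt_4 {V : Type u} [Fintype V] [DecidableEq V] (T : SimpleGraph V) (hT : T.IsTree)
    (h3 : 3 ≤ Fintype.card V) (hham : (square T).IsHamiltonian) :
    ¬ ContainsSubgraph T SK13 := by
  rintro ⟨f, hf⟩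
  obtain ⟨a, p, hp⟩ := hham (by omega)
  have hac : T.IsAcyclic := hT.2
  have hSK : ∀ i j : Fin 7,
      s(i, j) ∈ ({s(0,1), s(0,2), s(0,3), s(1,4), s(2,5), s(3,6)} : Set (Sym2 (Fin 7))) →
      i ≠ j → SK13.Adj i j := by
    intro i j hmem hne
    rw [SK13, fromEdgeSet_adj]
    exact ⟨hmem, hne⟩
  have adj01 : T.Adj (f 0) (f 1) := f.map_adj (hSK 0 1 (by simp) (by decide))
  have adj02 : T.Adj (f 0) (f 2) := f.map_adj (hSK 0 2 (by simp) (by decide))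
  have adj03 : T.Adj (f 0) (f 3) := f.map_adj (hSK 0 3 (by simp) (by decide))
  have adj14 : T.Adj (f 1) (f 4) := f.map_adj (hSK 1 4 (by simp) (by decide))
  have adj25 : T.Adj (f 2) (f 5) := f.map_adj (hSK 2 5 (by simp) (by decide))
  have adj36 : T.Adj (f 3) (f 6) := f.map_adj (hSK 3 6 (by simp) (by decide))
  have hne40 : f 4 ≠ f 0 := fun h => by exact absurd (hf h) (by decide)
  have hne50 : f 5 ≠ f 0 := fun h => by exact absurd (hf h) (by decide)
  have hne60 : f 6 ≠ f 0 := fun h => by exact absurd (hf h) (by decide)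
  have hne12 : f 1 ≠ f 2 := fun h => by exact absurd (hf h) (by decide)
  have hne13 : f 1 ≠ f 3 := fun h => by exact absurd (hf h) (by decide)
  have hne23 : f 2 ≠ f 3 := fun h => by exact absurd (hf h) (by decide)
  obtain ⟨d1, hd1, h1⟩ := key_dart hac adj01 adj14 hne40 hp
  obtain ⟨d2, hd2, h2⟩ := key_dart hac adj02 adj25 hne50 hp
  obtain ⟨d3, hd3, h3'⟩ := key_dart hac adj03 adj36 hne60 hp
  -- two darts of the same orientation at `c` must coincide, contradicting
  -- disjointness of the components
  have pairP : ∀ {d d' : (square T).Dart} {m m' : V}, T.Adj (f 0) m → T.Adj (f 0) m' →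
      m ≠ m' → d ∈ p.darts → d' ∈ p.darts →
      (d.fst = f 0 ∧ d.snd ∈ Aset T (f 0) m) →
      (d'.fst = f 0 ∧ d'.snd ∈ Aset T (f 0) m') → False := by
    intro d d' m m' hm hm' hmm hd hd' ⟨hdc, hdA⟩ ⟨hdc', hdA'⟩
    have : d = d' := dart_fst_unique hp hd hd' (hdc.trans hdc'.symm)
    rw [this] at hdA
    exact Aset_disjoint hac hm hm' hmm hdA hdA'
  have pairQ : ∀ {d d' : (square T).Dart} {m m' : V}, T.Adj (f 0) m → T.Adj (f 0) m' →
      m ≠ m' → d ∈ p.darts → d' ∈ p.darts →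
      (d.snd = f 0 ∧ d.fst ∈ Aset T (f 0) m) →
      (d'.snd = f 0 ∧ d'.fst ∈ Aset T (f 0) m') → False := by
    intro d d' m m' hm hm' hmm hd hd' ⟨hdc, hdA⟩ ⟨hdc', hdA'⟩
    have : d = d' := dart_snd_unique hp hd hd' (hdc.trans hdc'.symm)
    rw [this] at hdA
    exact Aset_disjoint hac hm hm' hmm hdA hdA'
  rcases h1 with h1 | h1 <;> rcases h2 with h2 | h2 <;> rcases h3' with h3' | h3'
  · exact pairP adj01 adj02 hne12 hd1 hd2 h1 h2
  · exact pairP adj01 adj02 hne12 hd1 hd2 h1 h2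
  · exact pairP adj01 adj03 hne13 hd1 hd3 h1 h3'
  · exact pairQ adj02 adj03 hne23 hd2 hd3 h2 h3'
  · exact pairP adj02 adj03 hne23 hd2 hd3 h2 h3'
  · exact pairQ adj01 adj03 hne13 hd1 hd3 h1 h3'
  · exact pairQ adj01 adj02 hne12 hd1 hd2 h1 h2
  · exact pairQ adj01 adj02 hne12 hd1 hd2 h1 h2
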